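/- Let g be a finite-dimensional Lie algebra over a field k with basis (T_i)_{i∈I} (I a finite index set), and let f_{ik}^j be the structure constants defined by ⁅T_i, T_k⁆ = Σ_j f_{ik}^j T_j. Let n ≥ 1 and let Π : I^n → k be any coefficient tensor satisfying, for every k ∈ I and every (i_1, …, i_n) ∈ I^n, the condition Σ_{j=1}^{n} Σ_{l∈I} f_{kl}^{i_j} · Π(i_1, …, i_{j-1}, l, i_{j+1}, …, i_n) = 0. Then the element P := Σ_{(i_1,…,i_n)∈I^n} Π(i_1,…,i_n) · ι(T_{i_1}) ⋯ ι(T_{i_n}) of the universal enveloping algebra U(g) commutes with ι(T_k) for every k ∈ I, and hence lies in the center of U(g). -/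

import Mathlib

open UniversalEnvelopingAlgebra

set_option synthInstance.maxHeartbeats 1000000
set_option maxHeartbeats 1000000

attribute [local instance] LieRing.ofAssociativeRing

private lemma comm_prod_ofFn {A : Type*} [Ring A] (a : A) :
    ∀ (n : ℕ) (x : Fin n → A),
      a * (List.ofFn x).prod - (List.ofFn x).prod * a
        = ∑ j : Fin n, (List.ofFn (Function.update x j (a * x j - x j * a))).prod := by
  intro n
  induction n with
  | zero => intro x; simp
  | succ n ih =>
    intro x
    have htail : ∀ (j : Fin n) (c : A),
        (fun m : Fin n => Function.update x j.succ c m.succ)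
          = Function.update (fun m : Fin n => x m.succ) j c := by
      intro j c
      funext m
      simp [Function.update_apply, Fin.succ_inj]
    have h0 : List.ofFn (Function.update x 0 (a * x 0 - x 0 * a))
        = (a * x 0 - x 0 * a) :: List.ofFn (fun m : Fin n => x m.succ) := by
      rw [List.ofFn_succ]
      simp [Function.update_apply, Fin.succ_ne_zero]
    have hs : ∀ j : Fin n,
        (List.ofFn (Function.update x j.succ (a * x j.succ - x j.succ * a))).prod
          = x 0 * (List.ofFn (Function.update (fun m : Fin n => x m.succ) j
              (a * x j.succ - x j.succ * a))).prod := by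
      intro j
      rw [List.ofFn_succ, List.prod_cons, htail,
        Function.update_of_ne (Fin.succ_ne_zero j).symm]
    rw [List.ofFn_succ, List.prod_cons, Fin.sum_univ_succ, h0, List.prod_cons]
    simp_rw [hs]
    rw [← Finset.mul_sum, ← ih (fun m => x m.succ)]
    noncomm_ring

private lemma mem_of_forall_ι_mem (k : Type*) [Field k] (L : Type*) [LieRing L]
    [LieAlgebra k L] (S : Subalgebra k (UniversalEnvelopingAlgebra k L))
    (hS : ∀ x : L, ι k x ∈ S) : ∀ u, u ∈ S := by
  let g : L →ₗ⁅k⁆ S :=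
    { toFun := fun x => ⟨ι k x, hS x⟩
      map_add' := fun x y => Subtype.ext (by simp)
      map_smul' := fun c x => Subtype.ext (by simp)
      map_lie' := fun {x y} => Subtype.ext (by
        show (ι k ⁅x, y⁆ : UniversalEnvelopingAlgebra k L) = _
        rw [LieHom.map_lie, Ring.lie_def]
        rfl) }
  have key : S.val.comp (lift k g) = AlgHom.id k (UniversalEnvelopingAlgebra k L) := by
    ext x
    show S.val (lift k g (mkAlgHom k L (TensorAlgebra.ι k x))) = _
    rw [lift_ι_apply']
    rfl
  intro u
  have : S.val ((lift k g) u) = u := by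
    rw [← AlgHom.comp_apply, key]; rfl
  rw [← this]
  exact (lift k g u).2

/-- Centrality criterion in the universal enveloping algebra: if the
coefficient tensor `Π` of a degree-`n` polynomial in the generators of a
finite-dimensional Lie algebra satisfies
`Σ_j Σ_l f_{k l}^{i_j} Π(i₁,…,l,…,i_n) = 0` (with `l` inserted in the `j`-th
slot) for all `k` and all multi-indices, then the corresponding element
`P = Σ Π(i₁,…,i_n) T_{i₁} ⋯ T_{i_n}` of `U(g)` commutes with every generator
`ι(T_k)`, and hence lies in the center of `U(g)`. -/
theorem centrality_criterion_weyl_polynomials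
    (k : Type*) [Field k] (L : Type*) [LieRing L] [LieAlgebra k L]
    [FiniteDimensional k L]
    (I : Type*) [Fintype I] (T : Module.Basis I k L)
    (f : I → I → I → k)
    (hf : ∀ i j : I, ⁅T i, T j⁆ = ∑ m : I, f i j m • T m)
    (n : ℕ) (hn : 1 ≤ n) (Pp : (Fin n → I) → k)
    (hPp : ∀ (κ : I) (i : Fin n → I),
      ∑ j : Fin n, ∑ l : I, f κ l (i j) * Pp (Function.update i j l) = 0) :
    (∀ κ : I,
      (∑ i : Fin n → I, Pp i •
          (List.ofFn fun j : Fin n => ι k (T (i j))).prod) * ι k (T κ)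
        = ι k (T κ) *
          (∑ i : Fin n → I, Pp i •
            (List.ofFn fun j : Fin n => ι k (T (i j))).prod)) ∧
    (∑ i : Fin n → I, Pp i •
        (List.ofFn fun j : Fin n => ι k (T (i j))).prod)
      ∈ Subalgebra.center k (UniversalEnvelopingAlgebra k L) := by
  classical
  set Q : (Fin n → I) → UniversalEnvelopingAlgebra k L :=
    fun i => (List.ofFn fun j : Fin n => ι k (T (i j))).prod with hQ
  set P : UniversalEnvelopingAlgebra k L := ∑ i : Fin n → I, Pp i • Q i with hPdef
  have key : ∀ κ : I, ι k (T κ) * P - P * ι k (T κ) = 0 := by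
    intro κ
    set a : UniversalEnvelopingAlgebra k L := ι k (T κ) with ha
    have hc : ∀ ii : I, a * ι k (T ii) - ι k (T ii) * a
        = ∑ m : I, f κ ii m • ι k (T m) := by
      intro ii
      have h1 : ι k ⁅T κ, T ii⁆ = a * ι k (T ii) - ι k (T ii) * a := by
        rw [LieHom.map_lie, Ring.lie_def]
      have h2 : (ι k : L →ₗ⁅k⁆ UniversalEnvelopingAlgebra k L) (∑ m : I, f κ ii m • T m)
          = ∑ m : I, f κ ii m • ι k (T m) := by
        rw [← LieHom.coe_toLinearMap, map_sum]
        exact Finset.sum_congr rfl fun m _ => by rw [map_smul]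
      rw [← h1, hf, h2]
    have comm1 : ∀ i : Fin n → I, a * Q i - Q i * a
        = ∑ j : Fin n, ∑ m : I, f κ (i j) m • Q (Function.update i j m) := by
      intro i
      rw [hQ]
      rw [comm_prod_ofFn]
      refine Finset.sum_congr rfl fun j _ => ?_
      set x : Fin n → UniversalEnvelopingAlgebra k L := fun j' => ι k (T (i j')) with hx
      have hupd : ∀ m : I, (fun j' => ι k (T (Function.update i j m j')))
          = Function.update x j (ι k (T m)) := by
        intro m
        funext j'
        by_cases hj : j' = j
        · subst hj; simp [hx]
        · simp [hx, Function.update_of_ne hj]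
      set M := MultilinearMap.mkPiAlgebraFin k n (UniversalEnvelopingAlgebra k L) with hMdef
      have hM : ∀ y : Fin n → UniversalEnvelopingAlgebra k L, (List.ofFn y).prod = M y :=
        fun y => (MultilinearMap.mkPiAlgebraFin_apply y).symm
      rw [hM, hc (i j)]
      have hsum := map_sum (M.toLinearMap x j) (fun m : I => f κ (i j) m • ι k (T m))
        Finset.univ
      rw [MultilinearMap.toLinearMap_apply] at hsum
      rw [hsum]
      refine Finset.sum_congr rfl fun m _ => ?_
      rw [map_smul, MultilinearMap.toLinearMap_apply]
      simp only [Q, hupd m, hM]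
    have expand : a * P - P * a
        = ∑ i : Fin n → I, ∑ j : Fin n, ∑ m : I,
            (Pp i * f κ (i j) m) • Q (Function.update i j m) := by
      rw [hPdef, Finset.mul_sum, Finset.sum_mul, ← Finset.sum_sub_distrib]
      refine Finset.sum_congr rfl fun i _ => ?_
      rw [mul_smul_comm, smul_mul_assoc, ← smul_sub, comm1 i, Finset.smul_sum]
      refine Finset.sum_congr rfl fun j _ => ?_
      rw [Finset.smul_sum]
      refine Finset.sum_congr rfl fun m _ => ?_
      rw [smul_smul]
    rw [expand, Finset.sum_comm]
    have reidx : ∀ j : Fin n,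
        (∑ i : Fin n → I, ∑ m : I, (Pp i * f κ (i j) m) • Q (Function.update i j m))
          = ∑ i : Fin n → I, ∑ l : I,
              (f κ l (i j) * Pp (Function.update i j l)) • Q i := by
      intro j
      have e1 : (∑ i : Fin n → I, ∑ m : I, (Pp i * f κ (i j) m) • Q (Function.update i j m))
          = ∑ p : (Fin n → I) × I, (Pp p.1 * f κ (p.1 j) p.2) • Q (Function.update p.1 j p.2) :=
        (Fintype.sum_prod_type
          (fun p : (Fin n → I) × I =>
            (Pp p.1 * f κ (p.1 j) p.2) • Q (Function.update p.1 j p.2))).symm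
      have e2 : (∑ i : Fin n → I, ∑ l : I, (f κ l (i j) * Pp (Function.update i j l)) • Q i)
          = ∑ p : (Fin n → I) × I, (f κ p.2 (p.1 j) * Pp (Function.update p.1 j p.2)) • Q p.1 :=
        (Fintype.sum_prod_type
          (fun p : (Fin n → I) × I =>
            (f κ p.2 (p.1 j) * Pp (Function.update p.1 j p.2)) • Q p.1)).symm
      rw [e1, e2]
      refine Fintype.sum_equiv
        ⟨fun p => (Function.update p.1 j p.2, p.1 j),
         fun p => (Function.update p.1 j p.2, p.1 j), ?_, ?_⟩ _ _ ?_
      · intro p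
        simp [Function.update_idem, Function.update_eq_self]
      · intro p
        simp [Function.update_idem, Function.update_eq_self]
      · intro p
        simp [Function.update_idem, Function.update_eq_self, mul_comm]
    simp_rw [reidx]
    rw [Finset.sum_comm]
    have hzero : ∀ i : Fin n → I,
        (∑ j : Fin n, ∑ l : I, (f κ l (i j) * Pp (Function.update i j l)) • Q i) = 0 := by
      intro i
      have h2 : (∑ j : Fin n, ∑ l : I, (f κ l (i j) * Pp (Function.update i j l)) • Q i)
          = (∑ j : Fin n, ∑ l : I, f κ l (i j) * Pp (Function.update i j l)) • Q i := by
        rw [Finset.sum_smul]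
        exact Finset.sum_congr rfl fun j _ => by rw [Finset.sum_smul]
      rw [h2, hPp κ i, zero_smul]
    simp_rw [hzero]
    simp
  have hcommL : ∀ κ : I, P * ι k (T κ) = ι k (T κ) * P := by
    intro κ
    have := key κ
    rw [sub_eq_zero] at this
    exact this.symm
  refine ⟨hcommL, ?_⟩
  rw [Subalgebra.mem_center_iff]
  intro b
  have hx : ∀ x : L, ι k x * P = P * ι k x := by
    intro x
    conv_lhs => rw [← T.sum_repr x]
    conv_rhs => rw [← T.sum_repr x]
    have h3 : (ι k : L →ₗ⁅k⁆ UniversalEnvelopingAlgebra k L) (∑ i : I, T.repr x i • T i)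
        = ∑ i : I, T.repr x i • ι k (T i) := by
      rw [← LieHom.coe_toLinearMap, map_sum]
      exact Finset.sum_congr rfl fun i _ => by rw [map_smul]
    rw [h3, Finset.sum_mul, Finset.mul_sum]
    refine Finset.sum_congr rfl fun i _ => ?_
    rw [smul_mul_assoc, mul_smul_comm, hcommL i]
  have hb : b ∈ Subalgebra.centralizer k {P} :=
    mem_of_forall_ι_mem k L (Subalgebra.centralizer k {P})
      (fun x => (Subalgebra.mem_centralizer_iff k).2 (by
        intro y hy
        rcases Set.mem_singleton_iff.1 hy with rfl
        exact (hx x).symm)) b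
  exact ((Subalgebra.mem_centralizer_iff k).1 hb P rfl).symm
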